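/- Let T ∈ B_loc(H) be a locally bounded operator on a locally Hilbert space H, and suppose there exists a linear map S : H → H with TS = ST = I_H. Then S is also locally bounded. -/

import Mathlib

local notation "⟪" x ", " y "⟫" => @inner ℂ _ _ x y

/-- A linear map `T` on a locally Hilbert space `H = ⋃ H_λ` is locally bounded if, for every
`λ`, `T` leaves `H_λ` and `H_λ^⊥` invariant and `T|_{H_λ}` is bounded. -/
def IsLocallyBounded {Λ H : Type*} [Preorder Λ]
    [NormedAddCommGroup H] [InnerProductSpace ℂ H]
    (Hs : Λ → Submodule ℂ H) (T : H →ₗ[ℂ] H) : Prop :=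
  ∀ l : Λ,
    (∀ h ∈ Hs l, T h ∈ Hs l) ∧
    (∀ h : H, (∀ u ∈ Hs l, ⟪u, h⟫ = 0) → ∀ u ∈ Hs l, ⟪u, T h⟫ = 0) ∧
    (∃ C : ℝ, ∀ h ∈ Hs l, ‖T h‖ ≤ C * ‖h‖)

/-- If `T` is a locally bounded operator on a locally Hilbert space and
`S : H → H` is a linear map with `TS = ST = I`, then `S` is locally bounded. -/
theorem inverse_is_locally_bounded {Λ H : Type*} [Preorder Λ] [Nonempty Λ]
    [NormedAddCommGroup H] [InnerProductSpace ℂ H]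
    (hdir : ∀ a b : Λ, ∃ c, a ≤ c ∧ b ≤ c)
    (Hs : Λ → Submodule ℂ H)
    (hmono : ∀ {a b : Λ}, a ≤ b → Hs a ≤ Hs b)
    (hcover : ∀ h : H, ∃ l, h ∈ Hs l)
    (hcomplete : ∀ l, IsComplete (Hs l : Set H))
    (T S : H →ₗ[ℂ] H)
    (hT : IsLocallyBounded Hs T)
    (hTS : T ∘ₗ S = LinearMap.id)
    (hST : S ∘ₗ T = LinearMap.id) :
    IsLocallyBounded Hs S := by
  have hTid : ∀ x, T (S x) = x := fun x => LinearMap.congr_fun hTS x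
  have hSid : ∀ x, S (T x) = x := fun x => LinearMap.congr_fun hST x
  intro l
  obtain ⟨hT1, hT2, C, hC⟩ := hT l
  haveI : CompleteSpace (Hs l) := (hcomplete l).completeSpace_coe
  -- key decomposition fact
  have key : ∀ h : H, ∃ p q : H, p ∈ Hs l ∧ (∀ u ∈ Hs l, ⟪u, q⟫ = 0) ∧
      S h = p + q ∧ h = T p + T q := by
    intro h
    refine ⟨(Submodule.orthogonalProjectionOnto (Hs l) (S h) : H),
      S h - (Submodule.orthogonalProjectionOnto (Hs l) (S h) : H),
      (Submodule.orthogonalProjectionOnto (Hs l) (S h)).2, ?_, by abel, ?_⟩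
    · intro u hu
      have hq := Submodule.sub_starProjection_mem_orthogonal (K := Hs l) (S h)
      exact (Submodule.mem_orthogonal _ _).mp hq u hu
    · rw [← map_add, add_sub_cancel, hTid]
  have hinv : ∀ h ∈ Hs l, S h ∈ Hs l := by
    intro h hh
    obtain ⟨p, q, hp, hq, hsum, hdec⟩ := key h
    have hTq : ∀ u ∈ Hs l, ⟪u, T q⟫ = 0 := hT2 _ hq
    have hTqmem : T q ∈ Hs l := by
      have : T q = h - T p := by rw [hdec]; abel
      rw [this]; exact Submodule.sub_mem _ hh (hT1 p hp)
    have hTq0 : T q = 0 := by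
      have := hTq _ hTqmem
      simpa [inner_self_eq_zero] using this
    have hq0 : q = 0 := by
      have := congrArg S hTq0
      simpa [hSid] using this
    rw [hsum, hq0, add_zero]; exact hp
  have horth : ∀ h : H, (∀ u ∈ Hs l, ⟪u, h⟫ = 0) → ∀ u ∈ Hs l, ⟪u, S h⟫ = 0 := by
    intro h hh
    obtain ⟨p, q, hp, hq, hsum, hdec⟩ := key h
    have hTq : ∀ u ∈ Hs l, ⟪u, T q⟫ = 0 := hT2 _ hq
    have hTp0 : T p = 0 := by
      have h1 : ∀ u ∈ Hs l, ⟪u, T p⟫ = 0 := by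
        intro u hu
        have : T p = h - T q := by rw [hdec]; abel
        rw [this, inner_sub_right, hh u hu, hTq u hu, sub_zero]
      have := h1 _ (hT1 p hp)
      simpa [inner_self_eq_zero] using this
    have hp0 : p = 0 := by
      have := congrArg S hTp0
      simpa [hSid] using this
    intro u hu
    rw [hsum, hp0, zero_add]
    exact hq u hu
  refine ⟨hinv, horth, ?_⟩
  -- bounded inverse theorem on Hs l
  let Tl : Hs l →ₗ[ℂ] Hs l := T.restrict hT1
  have hbij : Function.Bijective Tl := by
    constructor
    · intro x y hxy
      have := congrArg S (congrArg Subtype.val hxy)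
      simp only [Tl, LinearMap.restrict_apply, hSid] at this
      exact Subtype.ext this
    · intro y
      exact ⟨⟨S y, hinv y y.2⟩, Subtype.ext (hTid y)⟩
  have hcont : Continuous Tl := by
    refine (Tl.mkContinuousOfExistsBound ⟨C, fun x => ?_⟩).continuous
    simpa [Tl] using hC x x.2
  let e := (LinearEquiv.ofBijective Tl hbij).toContinuousLinearEquivOfContinuous hcont
  set g := (e.symm : Hs l →L[ℂ] Hs l) with hg
  refine ⟨‖g‖, fun h hh => ?_⟩
  have hS : (⟨S h, hinv h hh⟩ : Hs l) = g ⟨h, hh⟩ := by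
    have h2 : e ⟨S h, hinv h hh⟩ = ⟨h, hh⟩ := Subtype.ext (hTid h)
    have := congrArg e.symm h2
    rw [ContinuousLinearEquiv.symm_apply_apply] at this
    exact this
  calc ‖S h‖ = ‖(⟨S h, hinv h hh⟩ : Hs l)‖ := rfl
    _ = ‖g ⟨h, hh⟩‖ := by rw [hS]
    _ ≤ ‖g‖ * ‖(⟨h, hh⟩ : Hs l)‖ := g.le_opNorm _
    _ = ‖g‖ * ‖h‖ := rfl
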